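/- The function $h:(0,\infty)\to\mathbb{R}$, $h(t)=\frac{1}{t}-\frac{1}{e^t-1}$, extended by $h(0)=1/2$, is continuous and convex on $[0,\infty)$. -/

import Mathlib

open Real Set Filter



lemma exp_lower7 (x : ℝ) (hx : 0 ≤ x) :
    1 + x + x^2/2 + x^3/6 + x^4/24 + x^5/120 + x^6/720 + x^7/5040 ≤ Real.exp x := by
  have h := Real.sum_le_exp_of_nonneg hx 8
  have e : ∑ i ∈ Finset.range 8, x ^ i / i.factorial
      = 1 + x + x^2/2 + x^3/6 + x^4/24 + x^5/120 + x^6/720 + x^7/5040 := by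
    simp [Finset.sum_range_succ, Nat.factorial]
  linarith [e ▸ h]

lemma sinh_lower (x : ℝ) (hx : 0 ≤ x) :
    x + x^3/6 + x^5/120 ≤ Real.sinh x := by
  set P : ℝ := 1 + x + x^2/2 + x^3/6 + x^4/24 + x^5/120 + x^6/720 + x^7/5040 with hPdef
  have hP : P ≤ Real.exp x := exp_lower7 x hx
  have hP0 : 0 < P := by positivity
  have hinv : Real.exp (-x) ≤ 1/P := by
    rw [Real.exp_neg, one_div]
    exact inv_anti₀ hP0 hP
  have hpoly : 0 ≤ P^2 - 2*(x + x^3/6 + x^5/120)*P - 1 := by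
    have e : P^2 - 2*(x + x^3/6 + x^5/120)*P - 1 =
        x^7/2520 + x^8/2880 + x^9/5040 + x^10/21600 + x^11/60480
          + x^12/518400 + x^13/1814400 + x^14/25401600 := by
      rw [hPdef]; ring
    rw [e]; positivity
  have hkey : x + x^3/6 + x^5/120 ≤ (P - 1/P)/2 := by
    rw [le_div_iff₀ (by norm_num : (0:ℝ) < 2), ← sub_nonneg]
    have e2 : P - 1/P - (x + x^3/6 + x^5/120) * 2
        = (P^2 - 2*(x + x^3/6 + x^5/120)*P - 1)/P := by
      field_simp; ring
    rw [e2]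
    positivity
  rw [Real.sinh_eq]
  have h2 : P - 1/P ≤ Real.exp x - Real.exp (-x) := sub_le_sub hP hinv
  linarith


lemma poly_aux (x u s : ℝ) (hx : 0 ≤ x) (hu0 : 0 ≤ u) (hx2u : x^2 ≤ 6*u)
    (hqs : x*(1+u) ≤ s) : x^6 * (1 + s^2) ≤ s^6 := by
  have hq0 : 0 ≤ x*(1+u) := by positivity
  have hs0 : 0 ≤ s := le_trans hq0 hqs
  have h1 : x^6 ≤ 3*(x*(1+u))^4 := by
    nlinarith [mul_le_mul_of_nonneg_right hx2u (pow_nonneg hx 4), pow_nonneg hx 4,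
      pow_nonneg hx 6, mul_nonneg (mul_nonneg hu0 hu0) (pow_nonneg hx 4),
      mul_nonneg hu0 (pow_nonneg hx 4),
      mul_nonneg (mul_nonneg (mul_nonneg hu0 hu0) hu0) (pow_nonneg hx 4),
      mul_nonneg (mul_nonneg (mul_nonneg (mul_nonneg hu0 hu0) hu0) hu0) (pow_nonneg hx 4)]
  have h2 : x^6 * (1 + (x*(1+u))^2) ≤ (x*(1+u))^6 := by
    have key : 1 + x^2*(1+u)^2 ≤ (1+u)^6 := by
      nlinarith [mul_le_mul_of_nonneg_right hx2u (sq_nonneg (1+u)), sq_nonneg u,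
        pow_nonneg hu0 3, pow_nonneg hu0 4, pow_nonneg hu0 5, pow_nonneg hu0 6]
    nlinarith [mul_le_mul_of_nonneg_left key (pow_nonneg hx 6)]
  have hq2s2 : (x*(1+u))^2 ≤ s^2 := pow_le_pow_left₀ hq0 hqs 2
  have h3 : x^6 ≤ s^4 + s^2*(x*(1+u))^2 + (x*(1+u))^4 := by
    have h4s : (x*(1+u))^4 ≤ s^4 := pow_le_pow_left₀ hq0 hqs 4
    nlinarith [mul_le_mul_of_nonneg_right hq2s2 (sq_nonneg (x*(1+u)))]
  nlinarith [mul_nonneg (sub_nonneg.2 hq2s2) (sub_nonneg.2 h3), h2]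

lemma sinh_cube (x : ℝ) (hx : 0 ≤ x) : x^3 * Real.cosh x ≤ (Real.sinh x)^3 := by
  have hs := sinh_lower x hx
  have hs0 : 0 ≤ Real.sinh x := Real.sinh_nonneg_iff.2 hx
  have hc0 : 0 < Real.cosh x := Real.cosh_pos x
  have hc2 : Real.cosh x ^ 2 = 1 + Real.sinh x ^ 2 := by
    rw [Real.cosh_sq]; ring
  have hp : x^6 * (1 + Real.sinh x^2) ≤ Real.sinh x^6 := by
    apply poly_aux x (x^2/6 + x^4/120) (Real.sinh x) hx (by positivity)
    · nlinarith [pow_nonneg hx 4]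
    · nlinarith [hs]
  have hsq : (x^3 * Real.cosh x)^2 ≤ ((Real.sinh x)^3)^2 := by
    have e : (x^3 * Real.cosh x)^2 = x^6 * (1 + Real.sinh x^2) := by
      rw [mul_pow, ← hc2]; ring
    rw [e]
    calc x^6 * (1 + Real.sinh x^2) ≤ Real.sinh x ^ 6 := hp
    _ = ((Real.sinh x)^3)^2 := by ring
  have h1 : 0 ≤ x^3 * Real.cosh x := by positivity
  have h2 : 0 ≤ (Real.sinh x)^3 := by positivity
  exact (pow_le_pow_iff_left₀ h1 h2 (by norm_num)).1 hsq

lemma key_exp (t : ℝ) (ht : 0 < t) :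
    t^3 * Real.exp t * (Real.exp t + 1) ≤ 2 * (Real.exp t - 1)^3 := by
  have hx : (0:ℝ) ≤ t/2 := by linarith
  have hk := sinh_cube (t/2) hx
  rw [Real.sinh_eq, Real.cosh_eq] at hk
  set a : ℝ := Real.exp (t/2) with ha
  set b : ℝ := Real.exp (-(t/2)) with hb
  have hab : a * b = 1 := by rw [ha, hb, ← Real.exp_add]; simp
  have ha0 : 0 < a := Real.exp_pos _
  have hE : Real.exp t = a * a := by rw [ha, ← Real.exp_add]; ring_nf
  have h1 : t^3*(a+b) ≤ 2*(a-b)^3 := by nlinarith [hk]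
  rw [hE]
  have e1 : t^3*(a*a)*((a*a)+1) = a^3*(t^3*(a+b)) := by
    linear_combination (-(t^3*a^2)) * hab
  have e2 : 2*((a*a)-1)^3 = a^3*(2*(a-b)^3) := by
    linear_combination (2*((a*a-1)^2 + (a*a-1)*(a*(a-b)) + (a*(a-b))^2)) * hab
  rw [e1, e2]
  exact mul_le_mul_of_nonneg_left h1 (by positivity)



noncomputable def gfun : ℝ → ℝ := fun t => 1/t - 1/(Real.exp t - 1)
noncomputable def g1 : ℝ → ℝ := fun t => -(1/t^2) + Real.exp t/(Real.exp t - 1)^2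
noncomputable def g2 : ℝ → ℝ :=
  fun t => 2/t^3 - (Real.exp t*(Real.exp t+1))/(Real.exp t - 1)^3

lemma expm1_pos {t : ℝ} (ht : 0 < t) : 0 < Real.exp t - 1 := by
  have := Real.add_one_lt_exp (ne_of_gt ht)
  linarith

lemma hasDerivAt_gfun {t : ℝ} (ht : 0 < t) : HasDerivAt gfun (g1 t) t := by
  have ht0 : t ≠ 0 := ne_of_gt ht
  have hE : Real.exp t - 1 ≠ 0 := ne_of_gt (expm1_pos ht)
  have h1 : HasDerivAt (fun t : ℝ => 1/t) (-(1/t^2)) t := by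
    simpa [one_div] using hasDerivAt_inv ht0
  have h2 : HasDerivAt (fun t : ℝ => Real.exp t - 1) (Real.exp t) t :=
    (Real.hasDerivAt_exp t).sub_const 1
  have h3 : HasDerivAt (fun t : ℝ => 1/(Real.exp t - 1))
      (-(Real.exp t/(Real.exp t - 1)^2)) t := by
    simpa [one_div, neg_div] using h2.fun_inv hE
  have : HasDerivAt (fun t : ℝ => 1/t - 1/(Real.exp t - 1)) _ t := h1.fun_sub h3
  convert this using 1
  · rfl
  simp only [g1]
  ring

lemma hasDerivAt_g1 {t : ℝ} (ht : 0 < t) : HasDerivAt g1 (g2 t) t := by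
  have ht0 : t ≠ 0 := ne_of_gt ht
  have hE : Real.exp t - 1 ≠ 0 := ne_of_gt (expm1_pos ht)
  have h1 : HasDerivAt (fun t : ℝ => -(1/t^2)) (2/t^3) t := by
    have : HasDerivAt (fun t : ℝ => -(1/t^2)) _ t := ((hasDerivAt_const t (1:ℝ)).fun_div (hasDerivAt_pow 2 t) (pow_ne_zero 2 ht0)).fun_neg
    convert this using 1
    field_simp
    ring
  have h2 : HasDerivAt (fun t : ℝ => Real.exp t - 1) (Real.exp t) t :=
    (Real.hasDerivAt_exp t).sub_const 1
  have h2' : HasDerivAt (fun t : ℝ => (Real.exp t - 1)^2)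
      (2*(Real.exp t - 1)*Real.exp t) t := by
    simpa using h2.fun_pow 2
  have h3 : HasDerivAt (fun t : ℝ => Real.exp t/(Real.exp t - 1)^2)
      ((Real.exp t*(Real.exp t - 1)^2 - Real.exp t*(2*(Real.exp t - 1)*Real.exp t))
        / ((Real.exp t - 1)^2)^2) t :=
    (Real.hasDerivAt_exp t).div h2' (pow_ne_zero 2 hE)
  have : HasDerivAt (fun t : ℝ => -(1/t^2) + Real.exp t/(Real.exp t - 1)^2) _ t := h1.fun_add h3
  convert this using 1
  · rfl
  simp only [g2]
  field_simp
  ring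





lemma squeeze_lemma :
    Tendsto (fun t : ℝ => if t = 0 then 1 / 2 else 1 / t - 1 / (Real.exp t - 1))
      (nhdsWithin 0 (Set.Ioi 0)) (nhds (1/2 : ℝ)) := by
  set f : ℝ → ℝ := fun t => if t = 0 then 1 / 2 else 1 / t - 1 / (Real.exp t - 1) with hf
  have hlo : Tendsto (fun t : ℝ => (1/2 - (2/9)*t)/(1+t)) (nhdsWithin 0 (Set.Ioi 0))
      (nhds (1/2 : ℝ)) := by
    have hc : ContinuousAt (fun t : ℝ => (1/2 - (2/9)*t)/(1+t)) 0 := by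
      apply ContinuousAt.div
      · fun_prop
      · fun_prop
      · norm_num
    have := hc.tendsto
    norm_num at this
    exact this.mono_left nhdsWithin_le_nhds
  have hhi : Tendsto (fun t : ℝ => 1/2 + (2/9)*t) (nhdsWithin 0 (Set.Ioi 0))
      (nhds (1/2 : ℝ)) := by
    have hc : ContinuousAt (fun t : ℝ => 1/2 + (2/9)*t) 0 := by fun_prop
    have := hc.tendsto
    norm_num at this
    exact this.mono_left nhdsWithin_le_nhds
  have hmem : Set.Ioo (0:ℝ) 1 ∈ nhdsWithin (0:ℝ) (Set.Ioi 0) :=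
    Ioo_mem_nhdsGT (by norm_num)
  apply tendsto_of_tendsto_of_tendsto_of_le_of_le' hlo hhi
  · -- lower bound eventually
    filter_upwards [hmem] with t ht
    obtain ⟨ht0, ht1⟩ := ht
    have hE := expm1_pos ht0
    have hD_low : t < Real.exp t - 1 := by
      have := Real.add_one_lt_exp (ne_of_gt ht0); linarith
    have hb := Real.exp_bound (x := t) (by rw [abs_of_pos ht0]; linarith)
      (by norm_num : 0 < 3)
    have hsum : ∑ m ∈ Finset.range 3, t ^ m / m.factorial = 1 + t + t^2/2 := by
      simp [Finset.sum_range_succ, Nat.factorial]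
    rw [hsum, abs_of_pos ht0] at hb
    have hb' : |Real.exp t - (1 + t + t^2/2)| ≤ (2/9)*t^3 := by
      calc |Real.exp t - (1 + t + t^2/2)| ≤ t ^ 3 * (Nat.succ 3 / (Nat.factorial 3 * 3)) := hb
      _ = (2/9)*t^3 := by norm_num [Nat.factorial]; ring
    rw [abs_le] at hb'
    have hN_low : t^2/2 - (2/9)*t^3 ≤ Real.exp t - 1 - t := by linarith [hb'.1]
    have hD_up : Real.exp t - 1 ≤ t + t^2 := by nlinarith [hb'.2, ht0.le, ht1.le]
    have hft : f t = 1/t - 1/(Real.exp t - 1) := by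
      rw [hf]; simp [ne_of_gt ht0]
    rw [hft]
    have hrw : 1/t - 1/(Real.exp t - 1) = (Real.exp t - 1 - t)/(t*(Real.exp t - 1)) := by
      field_simp
    rw [hrw, div_le_div_iff₀ (by positivity) (by positivity)]
    have hA : (0:ℝ) ≤ (1/2 - (2/9)*t)*t := by nlinarith
    nlinarith [mul_le_mul_of_nonneg_left hD_up hA,
      mul_le_mul_of_nonneg_right hN_low (by linarith : (0:ℝ) ≤ 1 + t)]
  · -- upper bound eventually
    filter_upwards [hmem] with t ht
    obtain ⟨ht0, ht1⟩ := ht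
    have hE := expm1_pos ht0
    have hD_low : t < Real.exp t - 1 := by
      have := Real.add_one_lt_exp (ne_of_gt ht0); linarith
    have hb := Real.exp_bound (x := t) (by rw [abs_of_pos ht0]; linarith)
      (by norm_num : 0 < 3)
    have hsum : ∑ m ∈ Finset.range 3, t ^ m / m.factorial = 1 + t + t^2/2 := by
      simp [Finset.sum_range_succ, Nat.factorial]
    rw [hsum, abs_of_pos ht0] at hb
    have hb' : |Real.exp t - (1 + t + t^2/2)| ≤ (2/9)*t^3 := by
      calc |Real.exp t - (1 + t + t^2/2)| ≤ t ^ 3 * (Nat.succ 3 / (Nat.factorial 3 * 3)) := hb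
      _ = (2/9)*t^3 := by norm_num [Nat.factorial]; ring
    rw [abs_le] at hb'
    have hN_up : Real.exp t - 1 - t ≤ t^2/2 + (2/9)*t^3 := by linarith [hb'.2]
    have hft : f t = 1/t - 1/(Real.exp t - 1) := by
      rw [hf]; simp [ne_of_gt ht0]
    rw [hft]
    have hrw : 1/t - 1/(Real.exp t - 1) = (Real.exp t - 1 - t)/(t*(Real.exp t - 1)) := by
      field_simp
    rw [hrw, div_le_iff₀ (by positivity)]
    nlinarith [mul_le_mul_of_nonneg_left hD_low.le
      (by nlinarith : (0:ℝ) ≤ (1/2 + (2/9)*t)*t)]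





theorem h_continuous_convex :
    ContinuousOn (fun t : ℝ => if t = 0 then 1 / 2 else 1 / t - 1 / (Real.exp t - 1))
      (Set.Ici (0 : ℝ)) ∧
    ConvexOn ℝ (Set.Ici (0 : ℝ))
      (fun t : ℝ => if t = 0 then 1 / 2 else 1 / t - 1 / (Real.exp t - 1)) := by
  set f : ℝ → ℝ := fun t => if t = 0 then 1 / 2 else 1 / t - 1 / (Real.exp t - 1) with hf
  have hfg : ∀ x : ℝ, 0 < x → f =ᶠ[nhds x] gfun := by
    intro x hx
    filter_upwards [isOpen_Ioi.mem_nhds hx] with y hy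
    have : (y:ℝ) ≠ 0 := ne_of_gt hy
    simp [hf, gfun, this]
  have hderiv : ∀ x : ℝ, 0 < x → deriv f x = g1 x := fun x hx =>
    ((hfg x hx).deriv_eq).trans (hasDerivAt_gfun hx).deriv
  have hdf_eq : ∀ x : ℝ, 0 < x → deriv f =ᶠ[nhds x] g1 := by
    intro x hx
    filter_upwards [isOpen_Ioi.mem_nhds hx] with y hy
    exact hderiv y hy
  have hcont : ContinuousOn f (Set.Ici (0:ℝ)) := by
    intro x hx
    rcases eq_or_lt_of_le (Set.mem_Ici.mp hx) with hx0 | hx'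
    · subst hx0  -- careful: hx0 : 0 = x
      rw [← Set.Ioi_insert]
      rw [continuousWithinAt_insert_self]
      have hf0 : f 0 = 1/2 := by simp [hf]
      unfold ContinuousWithinAt
      rw [hf0]
      exact squeeze_lemma
    · have hgc : ContinuousAt gfun x := (hasDerivAt_gfun hx').continuousAt
      exact (hgc.congr (hfg x hx').symm).continuousWithinAt
  refine ⟨hcont, ?_⟩
  apply convexOn_of_deriv2_nonneg (convex_Ici 0) hcont
  · rw [interior_Ici]
    intro x hx
    exact (((hasDerivAt_gfun hx).congr_of_eventuallyEq
      (hfg x hx)).differentiableAt).differentiableWithinAt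
  · rw [interior_Ici]
    intro x hx
    exact (((hasDerivAt_g1 hx).congr_of_eventuallyEq
      (hdf_eq x hx)).differentiableAt).differentiableWithinAt
  · rw [interior_Ici]
    intro x hx
    have hd2 : deriv (deriv f) x = g2 x :=
      ((hdf_eq x hx).deriv_eq).trans (hasDerivAt_g1 hx).deriv
    show (0:ℝ) ≤ deriv (deriv f) x
    rw [hd2]
    have hE := expm1_pos hx
    have hk := key_exp x hx
    simp only [g2, sub_nonneg]
    rw [div_le_div_iff₀ (pow_pos hE 3) (pow_pos (show (0:ℝ) < x from hx) 3)]
    nlinarith [hk]
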